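/- Fix c ∈ ℝ and any positive mobile-station powers P_{m,k} > 0 for k ∈ {1,…,K}. Over the feasible set {(P_{b,1},…,P_{b,K}) : P_{b,k} > 0 for all k, Σ_{k=1}^K P_{b,k} ≤ P̄_b}, the high-SINR sum rate r_H is uniquely maximized by the equal allocation P_{b,k} = P̄_b/K for every k. -/

import Mathlib

open Real Set Finset

/-- The per-channel "shape" function `x ↦ log x - log (Nb + gb x)` is strictly
concave on `(0, ∞)`. -/
lemma stmt_14_aux_concave (gb Nb : ℝ) (hgb : 0 < gb) (hNb : 0 < Nb) :
    StrictConcaveOn ℝ (Set.Ioi (0:ℝ))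
      (fun x => Real.log x - Real.log (Nb + gb * x)) := by
  set g : ℝ → ℝ := fun x => Real.log x - Real.log (Nb + gb * x) with hg
  set g' : ℝ → ℝ := fun x => x⁻¹ - (Nb + gb * x)⁻¹ * gb with hg'
  have hlin : ∀ x : ℝ, HasDerivAt (fun y => Nb + gb * y) gb x := by
    intro x
    simpa using ((hasDerivAt_id x).const_mul gb).const_add Nb
  have hpos : ∀ x : ℝ, 0 < x → 0 < Nb + gb * x := by
    intro x hx; positivity
  have hd : ∀ x ∈ Set.Ioi (0:ℝ), HasDerivAt g (g' x) x := by
    intro x hx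
    have hx : 0 < x := hx
    have h1 : HasDerivAt Real.log x⁻¹ x := Real.hasDerivAt_log hx.ne'
    have h2 : HasDerivAt (fun y => Real.log (Nb + gb * y))
        ((Nb + gb * x)⁻¹ * gb) x :=
      by have h := (Real.hasDerivAt_log (hpos x hx).ne').comp x (hlin x); exact h
    exact h1.sub h2
  have hEq : ∀ x ∈ Set.Ioi (0:ℝ), deriv g =ᶠ[nhds x] g' := by
    intro x hx
    filter_upwards [isOpen_Ioi.mem_nhds hx] with y hy
    exact (hd y hy).deriv
  apply strictConcaveOn_of_deriv2_neg (convex_Ioi 0)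
  · intro x hx
    exact (hd x hx).continuousAt.continuousWithinAt
  · intro x hx
    rw [interior_Ioi] at hx
    have hx0 : 0 < x := hx
    have hNx : 0 < Nb + gb * x := hpos x hx0
    have hd2 : HasDerivAt g' (-(x^2)⁻¹ - -((Nb + gb * x)^2)⁻¹ * gb * gb) x := by
      have h1 : HasDerivAt (fun y : ℝ => y⁻¹) (-(x^2)⁻¹) x := hasDerivAt_inv hx0.ne'
      have h2 : HasDerivAt (fun y => (Nb + gb * y)⁻¹)
          (-((Nb + gb * x)^2)⁻¹ * gb) x :=
        (hasDerivAt_inv hNx.ne').comp x (hlin x)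
      exact h1.sub (h2.mul_const gb)
    have hiter : deriv^[2] g x = -(x^2)⁻¹ - -((Nb + gb * x)^2)⁻¹ * gb * gb := by
      have : deriv (deriv g) x = deriv g' x := (hEq x hx0).deriv_eq
      simp only [Function.iterate_succ, Function.iterate_zero, Function.comp_apply, id]
      rw [this, hd2.deriv]
    rw [hiter]
    have hx2 : (0:ℝ) < x ^ 2 := by positivity
    have hN2 : (0:ℝ) < (Nb + gb * x) ^ 2 := by positivity
    have hkey : gb * gb / (Nb + gb * x) ^ 2 < 1 / x ^ 2 :=
      (div_lt_div_iff₀ hN2 hx2).mpr (by nlinarith [mul_pos hNb hx0, sq_nonneg Nb, mul_pos hgb hx0, mul_pos (mul_pos hNb hgb) hx0])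
    have e1 : -((Nb + gb * x)^2)⁻¹ * gb * gb = -(gb * gb / (Nb + gb * x) ^ 2) := by
      ring
    have e2 : -(x^2)⁻¹ = -(1 / x ^ 2) := by ring
    rw [e1, e2]
    linarith

/-- The per-channel "shape" function is strictly increasing on `(0, ∞)`. -/
lemma stmt_14_aux_mono (gb Nb : ℝ) (hgb : 0 < gb) (hNb : 0 < Nb) :
    StrictMonoOn (fun x => Real.log x - Real.log (Nb + gb * x)) (Set.Ioi (0:ℝ)) := by
  intro x hx y hy hxy
  have hx : 0 < x := hx
  have hy : 0 < y := hy
  have hNx : 0 < Nb + gb * x := by positivity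
  have hNy : 0 < Nb + gb * y := by positivity
  have h : Real.log (x * (Nb + gb * y)) < Real.log (y * (Nb + gb * x)) := by
    apply Real.log_lt_log (by positivity)
    nlinarith
  rw [Real.log_mul hx.ne' hNy.ne', Real.log_mul hy.ne' hNx.ne'] at h
  simp only
  linarith

/-- High-SINR regime: for any fixed mobile-station powers and canceller
position, the equal base-station power allocation P_{b,k} = P̄_b/K uniquely
maximizes the high-SINR sum rate over the feasible set. -/
theorem stmt_14 (K : ℕ) (hK : 1 ≤ K) (c : ℝ)
    (hmb hbm : ℕ → ℝ)
    (hhmb : ∀ k ∈ Finset.Icc 1 K, 0 < hmb k)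
    (hhbm : ∀ k ∈ Finset.Icc 1 K, 0 < hbm k)
    (gb gm Nb Nm Pb_max : ℝ)
    (hgb : 0 < gb) (hgm : 0 < gm) (hNb : 0 < Nb) (hNm : 0 < Nm)
    (hPb_max : 0 < Pb_max)
    (Pm : ℕ → ℝ) (hPm : ∀ k ∈ Finset.Icc 1 K, 0 < Pm k)
    (rH : (ℕ → ℝ) → ℝ)
    (hrH : ∀ Pb : ℕ → ℝ, rH Pb = ∑ k ∈ Finset.Icc 1 K,
      (Real.logb 2 (hmb k * Pm k / (Nb + gb * Pb k)) +
       Real.logb 2 (hbm k * Pb k / (Nm + gm * ((k : ℝ) - c) ^ 2 * Pm k)))) :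
    ∀ Pb : ℕ → ℝ, (∀ k ∈ Finset.Icc 1 K, 0 < Pb k) →
      (∑ k ∈ Finset.Icc 1 K, Pb k) ≤ Pb_max →
      (∃ k ∈ Finset.Icc 1 K, Pb k ≠ Pb_max / K) →
      rH Pb < rH (fun _ => Pb_max / K) := by
  intro Pb hPb hsum hne
  obtain ⟨k₀, hk₀t, hk₀⟩ := hne
  set g : ℝ → ℝ := fun x => Real.log x - Real.log (Nb + gb * x) with hgdef
  have hKpos : (0:ℝ) < K := by exact_mod_cast hK
  have hcard : (Finset.Icc 1 K).card = K := by simp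
  have heqpos : 0 < Pb_max / K := div_pos hPb_max hKpos
  have hlog2 : (0:ℝ) < Real.log 2 := Real.log_pos (by norm_num)
  -- rewrite rH in separated form
  set C : ℕ → ℝ := fun k =>
    (Real.log (hmb k * Pm k) + Real.log (hbm k)
      - Real.log (Nm + gm * ((k : ℝ) - c) ^ 2 * Pm k)) / Real.log 2 with hC
  have hrw : ∀ P : ℕ → ℝ, (∀ k ∈ Finset.Icc 1 K, 0 < P k) →
      rH P = (∑ k ∈ Finset.Icc 1 K, C k)
        + (∑ k ∈ Finset.Icc 1 K, g (P k)) / Real.log 2 := by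
    intro P hP
    rw [hrH, Finset.sum_div, ← Finset.sum_add_distrib]
    apply Finset.sum_congr rfl
    intro k hk
    have hPk : 0 < P k := hP k hk
    have hD : 0 < Nm + gm * ((k : ℝ) - c) ^ 2 * Pm k := by
      have := hPm k hk; positivity
    have hNbk : 0 < Nb + gb * P k := by positivity
    have hmbPm : 0 < hmb k * Pm k := mul_pos (hhmb k hk) (hPm k hk)
    have hbmk : 0 < hbm k := hhbm k hk
    have hnum : Real.log (hmb k * Pm k / (Nb + gb * P k))
        + Real.log (hbm k * P k / (Nm + gm * ((k : ℝ) - c) ^ 2 * Pm k))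
        = (Real.log (hmb k * Pm k) + Real.log (hbm k)
            - Real.log (Nm + gm * ((k : ℝ) - c) ^ 2 * Pm k))
          + (Real.log (P k) - Real.log (Nb + gb * P k)) := by
      rw [Real.log_div hmbPm.ne' hNbk.ne',
        Real.log_div (mul_pos hbmk hPk).ne' hD.ne',
        Real.log_mul hbmk.ne' hPk.ne']
      ring
    simp only [Real.logb, hC, hgdef]
    rw [← add_div (Real.log (hmb k * Pm k / (Nb + gb * P k))), hnum, add_div]
  -- key inequality on the shape function
  have hmem : ∀ k ∈ Finset.Icc 1 K, Pb k ∈ Set.Ioi (0:ℝ) := fun k hk => hPb k hk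
  have hmono := stmt_14_aux_mono gb Nb hgb hNb
  have key : (∑ k ∈ Finset.Icc 1 K, g (Pb k))
      < ∑ k ∈ Finset.Icc 1 K, g (Pb_max / K) := by
    rw [Finset.sum_const, hcard, nsmul_eq_mul]
    by_cases hconst : ∃ j ∈ Finset.Icc 1 K, ∃ l ∈ Finset.Icc 1 K, Pb j ≠ Pb l
    · -- strict Jensen
      have hJ := (stmt_14_aux_concave gb Nb hgb hNb).lt_map_sum
        (w := fun _ => (K:ℝ)⁻¹) (p := Pb) (t := Finset.Icc 1 K)
        (fun _ _ => by positivity)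
        (by rw [Finset.sum_const, hcard, nsmul_eq_mul, mul_inv_cancel₀ hKpos.ne'])
        hmem hconst
      simp only [smul_eq_mul, hgdef] at hJ
      have hsum' : ∑ k ∈ Finset.Icc 1 K, (K:ℝ)⁻¹ * Pb k
          = (∑ k ∈ Finset.Icc 1 K, Pb k) / K := by
        rw [← Finset.mul_sum]; ring
      rw [hsum'] at hJ
      have hSpos : 0 < (∑ k ∈ Finset.Icc 1 K, Pb k) / K := by
        apply div_pos _ hKpos
        exact Finset.sum_pos hPb ⟨1, by simp [hK]⟩
      have hle : g ((∑ k ∈ Finset.Icc 1 K, Pb k) / K) ≤ g (Pb_max / K) :=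
        hmono.monotoneOn hSpos heqpos (by gcongr)
      have h1 : (K:ℝ)⁻¹ * ∑ k ∈ Finset.Icc 1 K, g (Pb k) < g (Pb_max / K) := by
        rw [Finset.mul_sum]
        calc ∑ k ∈ Finset.Icc 1 K, (K:ℝ)⁻¹ * g (Pb k)
            < g ((∑ k ∈ Finset.Icc 1 K, Pb k) / K) := hJ
          _ ≤ g (Pb_max / K) := hle
      calc ∑ k ∈ Finset.Icc 1 K, g (Pb k)
          = (K:ℝ) * ((K:ℝ)⁻¹ * ∑ k ∈ Finset.Icc 1 K, g (Pb k)) := by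
            field_simp
        _ < (K:ℝ) * g (Pb_max / K) := by
            exact (mul_lt_mul_iff_right₀ hKpos).mpr h1
    · -- all powers equal
      push_neg at hconst
      have hall : ∀ k ∈ Finset.Icc 1 K, Pb k = Pb k₀ := fun k hk =>
        hconst k hk k₀ hk₀t
      have hS : (∑ k ∈ Finset.Icc 1 K, Pb k) = K * Pb k₀ := by
        rw [Finset.sum_congr rfl hall, Finset.sum_const, hcard, nsmul_eq_mul]
      have hv : Pb k₀ < Pb_max / K := by
        rcases lt_or_eq_of_le (le_div_iff₀' hKpos |>.mpr (hS ▸ hsum)) with h | h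
        · exact h
        · exact absurd h hk₀
      have hgv : g (Pb k₀) < g (Pb_max / K) :=
        hmono (hPb k₀ hk₀t) heqpos hv
      calc ∑ k ∈ Finset.Icc 1 K, g (Pb k)
          = (K:ℝ) * g (Pb k₀) := by
            rw [Finset.sum_congr rfl (fun k hk => by rw [hall k hk]),
              Finset.sum_const, hcard, nsmul_eq_mul]
        _ < (K:ℝ) * g (Pb_max / K) := (mul_lt_mul_iff_right₀ hKpos).mpr hgv
  rw [hrw Pb hPb, hrw (fun _ => Pb_max / K) (fun k _ => heqpos)]
  exact add_lt_add_right ((div_lt_div_iff_of_pos_right hlog2).mpr key) _
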